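/- The minimal number k(n) such that every collection of at least k quartets (4-element subsets of [n]) is phylogenetically decisive is greater than C(n,4) − (n − 3); i.e., there exists a collection S' of quartets with |S'| = C(n,4) − (n − 3) that is not decisive. -/

import Mathlib

open SimpleGraph Finset

/-- The edge `e` separates `a,b` from `c,d`: after deleting `e`, `a` and `b` lie in one
connected component and `c` and `d` in the other. -/
def Separates {V : Type} (G : SimpleGraph V) (e : Sym2 V) (a b c d : V) : Prop :=
  e ∈ G.edgeSet ∧ (G.deleteEdges {e}).Reachable a b ∧
    (G.deleteEdges {e}).Reachable c d ∧ ¬ (G.deleteEdges {e}).Reachable a c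

/-- A binary phylogenetic tree on taxon set `X`: a finite unrooted tree all of whose
vertices have degree 1 or 3, with its leaves bijectively labeled by `X`. -/
structure PhyloTree (X : Type) where
  V : Type
  finV : Finite V
  g : SimpleGraph V
  tree : g.IsTree
  deg : ∀ v : V, Nat.card (g.neighborSet v) = 1 ∨ Nat.card (g.neighborSet v) = 3
  lab : X → V
  inj : Function.Injective lab
  leaf_iff : ∀ v : V, Nat.card (g.neighborSet v) = 1 ↔ ∃ x, lab x = v

/-- `T` displays the quartet tree `ab|cd`. -/
def PhyloTree.Displays {X : Type} (T : PhyloTree X) (a b c d : X) : Prop :=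
  ∃ e, Separates T.g e (T.lab a) (T.lab b) (T.lab c) (T.lab d)

/-- The quartet tree `ab|cd` distinguishes the edge `e` of `T`: `e` is the unique edge
separating `{a,b}` from `{c,d}`. -/
def PhyloTree.Distinguishes {X : Type} (T : PhyloTree X) (e : Sym2 T.V) (a b c d : X) : Prop :=
  Separates T.g e (T.lab a) (T.lab b) (T.lab c) (T.lab d) ∧
    ∀ e', Separates T.g e' (T.lab a) (T.lab b) (T.lab c) (T.lab d) → e' = e

/-- Label-preserving isomorphism of phylogenetic trees on the same taxon set. -/
def PhyloTree.Iso {X : Type} (T T' : PhyloTree X) : Prop :=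
  ∃ f : T.V ≃ T'.V, (∀ u v, T.g.Adj u v ↔ T'.g.Adj (f u) (f v)) ∧
    ∀ x, f (T.lab x) = T'.lab x

/-- `T` and `T'` induce the same subtree on the four-element taxon subset `Y`
(for `|Y| = 4` this says they display the same quartet trees on `Y`). -/
def AgreeOn {X : Type} (T T' : PhyloTree X) (Y : Finset X) : Prop :=
  ∀ a b c d, a ∈ Y → b ∈ Y → c ∈ Y → d ∈ Y →
    (T.Displays a b c d ↔ T'.Displays a b c d)

/-- A collection of quartets (4-element subsets of `X`) is phylogenetically decisive if
any two binary phylogenetic trees on `X` agreeing on every member are equal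
(i.e. label-preservingly isomorphic). -/
def Decisive {X : Type} (S : Finset (Finset X)) : Prop :=
  ∀ T T' : PhyloTree X, (∀ Y ∈ S, AgreeOn T T' Y) → T.Iso T'

/-- A quartet tree `ab|cd`, recorded as the ordered data of its two pairs. -/
structure Q4 (X : Type) where
  a : X
  b : X
  c : X
  d : X

/-- The support of a quartet tree. -/
def Q4.supp {X : Type} [DecidableEq X] (q : Q4 X) : Finset X := {q.a, q.b, q.c, q.d}

/-- The quartet tree as an unordered pair of unordered pairs (its topology). -/
def Q4.toSym {X : Type} (q : Q4 X) : Sym2 (Sym2 X) := s(s(q.a, q.b), s(q.c, q.d))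

namespace Cat15
abbrev Vt (n : ℕ) := Fin n ⊕ Fin (n - 2)
def posn (n : ℕ) (j : Fin n) : ℕ := min ((j : ℕ) - 1) (n - 3)
def catAdj (n : ℕ) (u v : Vt n) : Prop :=
  match u, v with
  | .inl _, .inl _ => False
  | .inl j, .inr k => (k : ℕ) = posn n j
  | .inr k, .inl j => (k : ℕ) = posn n j
  | .inr k, .inr k' => (k : ℕ) + 1 = (k' : ℕ) ∨ (k' : ℕ) + 1 = (k : ℕ)
def catG (n : ℕ) : SimpleGraph (Vt n) where
  Adj := catAdj n
  symm := ⟨by rintro (j | k) (j' | k') h <;> simp only [catAdj] at h ⊢ <;> omega⟩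
  loopless := ⟨by rintro (j | k) h <;> simp only [catAdj] at h <;> omega⟩
@[simp] lemma adj_ll (n : ℕ) (j j' : Fin n) : (catG n).Adj (.inl j) (.inl j') ↔ False := Iff.rfl
@[simp] lemma adj_lr (n : ℕ) (j : Fin n) (k : Fin (n-2)) :
    (catG n).Adj (.inl j) (.inr k) ↔ (k : ℕ) = posn n j := Iff.rfl
@[simp] lemma adj_rl (n : ℕ) (j : Fin n) (k : Fin (n-2)) :
    (catG n).Adj (.inr k) (.inl j) ↔ (k : ℕ) = posn n j := Iff.rfl
@[simp] lemma adj_rr (n : ℕ) (k k' : Fin (n-2)) :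
    (catG n).Adj (.inr k) (.inr k') ↔ (k : ℕ) + 1 = (k' : ℕ) ∨ (k' : ℕ) + 1 = (k : ℕ) := Iff.rfl
lemma posn_le (n : ℕ) (j : Fin n) : posn n j ≤ n - 3 := min_le_right _ _
lemma reach_invar {V : Type} {G : SimpleGraph V} (f : V → Prop)
    (hf : ∀ u v, G.Adj u v → (f u ↔ f v)) {u v : V} (h : G.Reachable u v) : f u ↔ f v := by
  obtain ⟨w⟩ := h
  induction w with
  | nil => exact Iff.rfl
  | cons h p ih => exact (hf _ _ h).trans ih

-- NEW PART
variable {n : ℕ}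

/-- pendant edge of leaf j -/
def pendE (hn : 5 ≤ n) (j : Fin n) : Sym2 (Vt n) :=
  s(.inl j, .inr ⟨posn n j, by have := posn_le n j; omega⟩)

/-- spine edge between internal k and k+1 -/
def spineE (k : ℕ) (hk : k + 1 < n - 2) : Sym2 (Vt n) :=
  s(.inr ⟨k, by omega⟩, .inr ⟨k + 1, hk⟩)

lemma pendE_mem (hn : 5 ≤ n) (j : Fin n) : pendE hn j ∈ (catG n).edgeSet := by
  simp [pendE, mem_edgeSet]

lemma spineE_mem (k : ℕ) (hk : k + 1 < n - 2) : spineE (n := n) k hk ∈ (catG n).edgeSet := by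
  simp [spineE, mem_edgeSet]

/-- chain reachability along the spine in a subgraph of catG -/
lemma chain_reach (G' : SimpleGraph (Vt n)) (a b : ℕ) (hab : a ≤ b) (hb : b < n - 2)
    (h : ∀ t, a ≤ t → t + 1 ≤ b → ∀ (h1 : t < n - 2) (h2 : t + 1 < n - 2),
      G'.Adj (.inr ⟨t, h1⟩) (.inr ⟨t + 1, h2⟩)) :
    ∀ (ha : a < n - 2), G'.Reachable (.inr ⟨a, ha⟩) (.inr ⟨b, hb⟩) := by
  induction b, hab using Nat.le_induction with
  | base => intro ha; rfl
  | succ b hab ih =>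
    intro ha
    have hb' : b < n - 2 := by omega
    have r1 : G'.Reachable (.inr ⟨a, ha⟩) (.inr ⟨b, hb'⟩) :=
      ih hb' (fun t ht ht' h1 h2 => h t ht (by omega) h1 h2) ha
    exact r1.trans (h b hab (le_refl _) hb' hb).reachable

end Cat15

namespace Part2
open Cat15
variable {n : ℕ}

def sideS (n k : ℕ) : Vt n → Prop := fun v =>
  match v with
  | .inl j => posn n j ≤ k
  | .inr i => (i : ℕ) ≤ k

lemma sideS_invar (k : ℕ) (hk : k + 1 < n - 2) :
    ∀ u v, ((catG n).deleteEdges {spineE k hk}).Adj u v → (sideS n k u ↔ sideS n k v) := by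
  rintro (j | i) (j' | i') h <;>
    simp only [deleteEdges_adj, Set.mem_singleton_iff, adj_ll, adj_lr, adj_rl, adj_rr] at h
  · exact h.1.elim
  · obtain ⟨h1, _⟩ := h; simp only [sideS]; omega
  · obtain ⟨h1, _⟩ := h; simp only [sideS]; omega
  · obtain ⟨h1, h2⟩ := h
    simp only [spineE, Sym2.eq_iff, Sum.inr.injEq, Fin.mk.injEq, Fin.ext_iff] at h2
    simp only [sideS]
    omega

lemma chain_reach2 (G' : SimpleGraph (Vt n)) (a b : ℕ) (ha : a < n - 2) (hb : b < n - 2)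
    (h : ∀ t, min a b ≤ t → t + 1 ≤ max a b → ∀ (h1 : t < n - 2) (h2 : t + 1 < n - 2),
      G'.Adj (.inr ⟨t, h1⟩) (.inr ⟨t + 1, h2⟩)) :
    G'.Reachable (.inr ⟨a, ha⟩) (.inr ⟨b, hb⟩) := by
  rcases le_total a b with hab | hab
  · exact chain_reach G' a b hab hb
      (fun t ht ht' h1 h2 => h t (by omega) (by omega) h1 h2) ha
  · exact (chain_reach G' b a hab ha
      (fun t ht ht' h1 h2 => h t (by omega) (by omega) h1 h2) hb).symm

lemma spine_del_step (k : ℕ) (hk : k + 1 < n - 2) (t : ℕ) (htk : t ≠ k)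
    (h1 : t < n - 2) (h2 : t + 1 < n - 2) :
    ((catG n).deleteEdges {spineE k hk}).Adj (.inr ⟨t, h1⟩) (.inr ⟨t + 1, h2⟩) := by
  simp only [deleteEdges_adj, Set.mem_singleton_iff, adj_rr, spineE, Sym2.eq_iff,
    Sum.inr.injEq, Fin.mk.injEq, Fin.val_mk]
  exact ⟨Or.inl trivial, by omega⟩

lemma spine_del_pend (k : ℕ) (hk : k + 1 < n - 2) (j : Fin n) (hp : posn n j < n - 2) :
    ((catG n).deleteEdges {spineE k hk}).Adj (.inl j) (.inr ⟨posn n j, hp⟩) := by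
  simp only [deleteEdges_adj, Set.mem_singleton_iff, adj_lr, spineE, Sym2.eq_iff]
  simp

lemma side_reach (hn : 5 ≤ n) (k : ℕ) (hk : k + 1 < n - 2) (p q : Fin n)
    (h : (posn n p ≤ k ∧ posn n q ≤ k) ∨ (k + 1 ≤ posn n p ∧ k + 1 ≤ posn n q)) :
    ((catG n).deleteEdges {spineE k hk}).Reachable (.inl p) (.inl q) := by
  have hp : posn n p < n - 2 := by have := posn_le n p; omega
  have hq : posn n q < n - 2 := by have := posn_le n q; omega
  have rp := (spine_del_pend k hk p hp).reachable
  have rq := (spine_del_pend k hk q hq).reachable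
  refine rp.trans (Reachable.trans ?_ rq.symm)
  apply chain_reach2
  intro t ht ht' h1 h2
  apply spine_del_step
  omega

lemma side_unreach (k : ℕ) (hk : k + 1 < n - 2) (p r : Fin n)
    (hp : posn n p ≤ k) (hr : k + 1 ≤ posn n r) :
    ¬ ((catG n).deleteEdges {spineE k hk}).Reachable (.inl p) (.inl r) := by
  intro h
  have := (reach_invar (sideS n k) (sideS_invar k hk) h).mp (by simpa [sideS] using hp)
  simp only [sideS] at this
  omega

lemma pend_del_isolated (hn : 5 ≤ n) (j : Fin n) :
    ∀ u v, ((catG n).deleteEdges {pendE hn j}).Adj u v → u ≠ .inl j ∧ v ≠ .inl j := by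
  have key : ∀ (p : Fin n) (i : Fin (n - 2)),
      ((catG n).deleteEdges {pendE hn j}).Adj (.inl p) (.inr i) → p ≠ j := by
    intro p i h
    rw [deleteEdges_adj] at h
    obtain ⟨h1, h2⟩ := h
    have h1' : (i : ℕ) = posn n p := h1
    rintro rfl
    apply h2
    simp only [Set.mem_singleton_iff, pendE]
    have hi : i = ⟨posn n p, by have := posn_le n p; omega⟩ := Fin.ext h1'
    rw [hi]
  rintro (p | i) (q | i') h
  · exact absurd ((deleteEdges_adj ..).mp h).1 (by simp)
  · exact ⟨by simp [key p i' h], by simp⟩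
  · exact ⟨by simp, by simp [key q i h.symm]⟩
  · exact ⟨by simp, by simp⟩

lemma pend_del_invar (hn : 5 ≤ n) (j : Fin n) {u v : Vt n}
    (h : ((catG n).deleteEdges {pendE hn j}).Reachable u v) :
    (u = Sum.inl j) ↔ (v = Sum.inl j) := by
  refine reach_invar (fun w => w = Sum.inl j) ?_ h
  intro u v huv
  have h2 := pend_del_isolated hn j u v huv
  constructor
  · intro h'; exact absurd h' h2.1
  · intro h'; exact absurd h' h2.2

lemma pend_del_step (hn : 5 ≤ n) (j : Fin n) (t : ℕ)
    (h1 : t < n - 2) (h2 : t + 1 < n - 2) :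
    ((catG n).deleteEdges {pendE hn j}).Adj (.inr ⟨t, h1⟩) (.inr ⟨t + 1, h2⟩) := by
  simp only [deleteEdges_adj, Set.mem_singleton_iff, adj_rr, pendE, Sym2.eq_iff, Fin.val_mk]
  constructor
  · exact Or.inl trivial
  · rintro (⟨h, -⟩ | ⟨-, h⟩) <;> exact absurd h (by simp)

lemma pend_del_pend (hn : 5 ≤ n) (j p : Fin n) (hpj : p ≠ j) (hp : posn n p < n - 2) :
    ((catG n).deleteEdges {pendE hn j}).Adj (.inl p) (.inr ⟨posn n p, hp⟩) := by
  simp only [deleteEdges_adj, Set.mem_singleton_iff, adj_lr, pendE, Sym2.eq_iff, Fin.val_mk,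
    Sum.inl.injEq, Sum.inr.injEq]
  constructor
  · trivial
  · rintro (⟨h, -⟩ | ⟨h, -⟩)
    · exact hpj h
    · exact absurd h (by simp)

lemma pend_del_reach (hn : 5 ≤ n) (j p q : Fin n) (hp : p ≠ j) (hq : q ≠ j) :
    ((catG n).deleteEdges {pendE hn j}).Reachable (.inl p) (.inl q) := by
  have hp' : posn n p < n - 2 := by have := posn_le n p; omega
  have hq' : posn n q < n - 2 := by have := posn_le n q; omega
  refine (pend_del_pend hn j p hp hp').reachable.trans
    (Reachable.trans ?_ (pend_del_pend hn j q hq hq').reachable.symm)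
  exact chain_reach2 _ _ _ _ _ (fun t _ _ h1 h2 => pend_del_step hn j t h1 h2)

lemma ncard3 {α : Type} (a b c : α) (h1 : a ≠ b) (h2 : a ≠ c) (h3 : b ≠ c) :
    ({a, b, c} : Set α).ncard = 3 := by
  rw [Set.ncard_insert_of_notMem (by simp [h1, h2]) ((Set.finite_singleton _).insert _),
    Set.ncard_insert_of_notMem (by simp [h3]) (Set.finite_singleton _), Set.ncard_singleton]

lemma deg_leaf (hn : 5 ≤ n) (j : Fin n) :
    Nat.card ((catG n).neighborSet (.inl j)) = 1 := by
  have : (catG n).neighborSet (.inl j) = {Sum.inr ⟨posn n j, by have := posn_le n j; omega⟩} := by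
    ext (p | i)
    · simp [mem_neighborSet]
    · simp [mem_neighborSet, Fin.ext_iff]
      try exact comm
  rw [this, Nat.card_coe_set_eq, Set.ncard_singleton]

lemma posn_eq_zero (hn : 5 ≤ n) (j : Fin n) : posn n j = 0 ↔ (j : ℕ) ≤ 1 := by
  simp only [posn]; omega

lemma deg_internal (hn : 5 ≤ n) (k : Fin (n - 2)) :
    Nat.card ((catG n).neighborSet (.inr k)) = 3 := by
  rw [Nat.card_coe_set_eq]
  rcases Nat.lt_or_ge 0 (k : ℕ) with hk0 | hk0
  · rcases Nat.lt_or_ge (k : ℕ) (n - 3) with hk1 | hk1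
    · -- middle: {inl (k+1), inr (k-1), inr (k+1)}
      have : (catG n).neighborSet (.inr k) =
          {Sum.inl ⟨(k : ℕ) + 1, by omega⟩, Sum.inr ⟨(k : ℕ) - 1, by omega⟩,
            Sum.inr ⟨(k : ℕ) + 1, by omega⟩} := by
        ext (p | i)
        · simp only [mem_neighborSet, adj_rl, Set.mem_insert_iff, Set.mem_singleton_iff,
            Sum.inl.injEq, Sum.inr.injEq, reduceCtorEq, or_false, Fin.ext_iff, Fin.val_mk, posn]
          omega
        · simp only [mem_neighborSet, adj_rr, Set.mem_insert_iff, Set.mem_singleton_iff,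
            Sum.inl.injEq, Sum.inr.injEq, reduceCtorEq, false_or, Fin.ext_iff, Fin.val_mk]
          omega
      rw [this]
      exact ncard3 _ _ _ (by simp) (by simp) (by simp [Fin.ext_iff] <;> omega)
    · -- top: k = n - 3 : {inl (n-2), inl (n-1), inr (n-4)}
      have hkv : (k : ℕ) = n - 3 := by have := k.isLt; omega
      have : (catG n).neighborSet (.inr k) =
          {Sum.inl ⟨n - 2, by omega⟩, Sum.inl ⟨n - 1, by omega⟩, Sum.inr ⟨n - 4, by omega⟩} := by
        ext (p | i)
        · simp only [mem_neighborSet, adj_rl, Set.mem_insert_iff, Set.mem_singleton_iff,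
            Sum.inl.injEq, Sum.inr.injEq, reduceCtorEq, or_false, Fin.ext_iff, Fin.val_mk, posn]
          have := p.isLt
          omega
        · simp only [mem_neighborSet, adj_rr, Set.mem_insert_iff, Set.mem_singleton_iff,
            Sum.inl.injEq, Sum.inr.injEq, reduceCtorEq, false_or, Fin.ext_iff, Fin.val_mk]
          have := i.isLt
          omega
      rw [this]
      exact ncard3 _ _ _ (by simp [Fin.ext_iff] <;> omega) (by simp) (by simp)
  · -- bottom: k = 0 : {inl 0, inl 1, inr 1}
    have hkv : (k : ℕ) = 0 := by omega
    have : (catG n).neighborSet (.inr k) =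
        {Sum.inl ⟨0, by omega⟩, Sum.inl ⟨1, by omega⟩, Sum.inr ⟨1, by omega⟩} := by
      ext (p | i)
      · simp only [mem_neighborSet, adj_rl, Set.mem_insert_iff, Set.mem_singleton_iff,
          Sum.inl.injEq, Sum.inr.injEq, reduceCtorEq, or_false, Fin.ext_iff, Fin.val_mk, posn]
        omega
      · simp only [mem_neighborSet, adj_rr, Set.mem_insert_iff, Set.mem_singleton_iff,
          Sum.inl.injEq, Sum.inr.injEq, reduceCtorEq, false_or, Fin.ext_iff, Fin.val_mk]
        omega
    rw [this]
    exact ncard3 _ _ _ (by simp [Fin.ext_iff]) (by simp) (by simp)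

lemma cat_step (t : ℕ) (h1 : t < n - 2) (h2 : t + 1 < n - 2) :
    (catG n).Adj (.inr ⟨t, h1⟩) (.inr ⟨t + 1, h2⟩) := by
  simp

lemma cat_connected (hn : 5 ≤ n) : (catG n).Connected := by
  have h0 : (0 : ℕ) < n - 2 := by omega
  rw [connected_iff]
  refine ⟨?_, ⟨Sum.inr ⟨0, h0⟩⟩⟩
  have hr : ∀ i : Fin (n - 2), (catG n).Reachable (.inr i) (.inr ⟨0, h0⟩) := by
    intro i
    have : (Sum.inr i : Vt n) = Sum.inr ⟨(i : ℕ), i.isLt⟩ := by simp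
    rw [this]
    exact chain_reach2 _ _ _ _ _ (fun t _ _ h1 h2 => cat_step t h1 h2)
  have hl : ∀ j : Fin n, (catG n).Reachable (.inl j) (.inr ⟨0, h0⟩) := by
    intro j
    have hp : posn n j < n - 2 := by have := posn_le n j; omega
    have : (catG n).Adj (.inl j) (.inr ⟨posn n j, hp⟩) := by simp
    exact this.reachable.trans (hr _)
  intro u v
  rcases u with j | i <;> rcases v with j' | i'
  · exact (hl j).trans (hl j').symm
  · exact (hl j).trans (hr i').symm
  · exact (hr i).trans (hl j').symm
  · exact (hr i).trans (hr i').symm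

lemma cat_acyclic (hn : 5 ≤ n) : (catG n).IsAcyclic := by
  rw [isAcyclic_iff_forall_adj_isBridge]
  rintro (j | i) (j' | i') h
  · exact absurd h (by simp)
  · -- pendant edge, u = inl j, v = inr i'
    have hiv : (i' : ℕ) = posn n j := h
    have hp : posn n j < n - 2 := by have := posn_le n j; omega
    have hi' : i' = ⟨posn n j, hp⟩ := Fin.ext hiv
    subst hi'
    rw [isBridge_iff]
    intro hreach
    have hreach' : ((catG n).deleteEdges {pendE hn j}).Reachable
        (.inl j) (.inr ⟨posn n j, hp⟩) := hreach
    have := pend_del_invar hn j hreach'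
    simp at this
  · -- pendant edge reversed
    have hiv : (i : ℕ) = posn n j' := h
    have hp : posn n j' < n - 2 := by have := posn_le n j'; omega
    have hi : i = ⟨posn n j', hp⟩ := Fin.ext hiv
    subst hi
    rw [isBridge_iff]
    intro hreach
    have heq : s((Sum.inr ⟨posn n j', hp⟩ : Vt n), Sum.inl j') = pendE hn j' := Sym2.eq_swap
    rw [heq] at hreach
    have hreach' : ((catG n).deleteEdges {pendE hn j'}).Reachable
        (.inr ⟨posn n j', hp⟩) (.inl j') := hreach
    have := pend_del_invar hn j' hreach'
    simp at this
  · -- spine edge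
    rw [isBridge_iff]
    rcases h with h | h
    · have h2 : (i : ℕ) + 1 < n - 2 := by rw [h]; exact i'.isLt
      have hi' : i' = ⟨(i : ℕ) + 1, h2⟩ := Fin.ext h.symm
      subst hi'
      intro hreach
      have heq : s((Sum.inr i : Vt n), Sum.inr ⟨(i : ℕ) + 1, h2⟩) =
          spineE (n := n) (i : ℕ) h2 := by
        simp only [spineE]
      rw [heq] at hreach
      have hreach' : ((catG n).deleteEdges {spineE (n := n) (i : ℕ) h2}).Reachable
          (.inr i) (.inr ⟨(i : ℕ) + 1, h2⟩) := hreach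
      have := (reach_invar (sideS n (i : ℕ)) (sideS_invar (i : ℕ) h2) hreach').mp
        (by simp [sideS])
      simp only [sideS] at this
      omega
    · have h2 : (i' : ℕ) + 1 < n - 2 := by rw [h]; exact i.isLt
      have hi : i = ⟨(i' : ℕ) + 1, h2⟩ := Fin.ext h.symm
      subst hi
      intro hreach
      have heq : s((Sum.inr ⟨(i' : ℕ) + 1, h2⟩ : Vt n), Sum.inr i') =
          spineE (n := n) (i' : ℕ) h2 := by
        rw [Sym2.eq_swap]
        simp only [spineE]
      rw [heq] at hreach
      have hreach' : ((catG n).deleteEdges {spineE (n := n) (i' : ℕ) h2}).Reachable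
          (.inr ⟨(i' : ℕ) + 1, h2⟩) (.inr i') := hreach
      have := (reach_invar (sideS n (i' : ℕ)) (sideS_invar (i' : ℕ) h2) hreach').mpr
        (by simp [sideS])
      simp only [sideS] at this
      omega

lemma cat_isTree (hn : 5 ≤ n) : (catG n).IsTree :=
  ⟨cat_connected hn, cat_acyclic hn⟩

/-- characterization of quartet displays in the caterpillar -/
def DispChar (n : ℕ) (p q r s : Fin n) : Prop :=
  ((p = q ∧ r ≠ p ∧ s ≠ p) ∨ (r = s ∧ p ≠ r ∧ q ≠ r)) ∨
  (∃ k, k + 1 < n - 2 ∧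
    ((posn n p ≤ k ∧ posn n q ≤ k ∧ k < posn n r ∧ k < posn n s) ∨
     (posn n r ≤ k ∧ posn n s ≤ k ∧ k < posn n p ∧ k < posn n q)))

lemma disp_iff (hn : 5 ≤ n) (p q r s : Fin n) :
    (∃ e, Separates (catG n) e (.inl p) (.inl q) (.inl r) (.inl s)) ↔ DispChar n p q r s := by
  constructor
  · rintro ⟨e, he, hpq, hrs, hpr⟩
    induction e with
    | _ u v =>
    rw [mem_edgeSet] at he
    rcases u with j | i <;> rcases v with j' | i'
    · exact absurd he (by simp)
    · -- pendant edge of j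
      have hiv : (i' : ℕ) = posn n j := he
      have hp' : posn n j < n - 2 := by have := posn_le n j; omega
      have hi' : i' = ⟨posn n j, hp'⟩ := Fin.ext hiv
      subst hi'
      have hePend : s((Sum.inl j : Vt n), Sum.inr ⟨posn n j, hp'⟩) = pendE hn j := rfl
      rw [hePend] at hpq hrs hpr
      left
      have h1 := pend_del_invar hn j hpq
      have h2 := pend_del_invar hn j hrs
      simp only [Sum.inl.injEq] at h1 h2
      by_cases hpj : p = j
      · have hqj : q = j := h1.mp hpj
        have hrj : r ≠ j := by
          rintro rfl
          exact hpr (by rw [hpj])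
        have hsj : s ≠ j := fun hs => hrj (h2.mpr hs)
        exact Or.inl ⟨hpj.trans hqj.symm, fun hr => hrj (hr.trans hpj),
          fun hs => hsj (hs.trans hpj)⟩
      · have hqj : q ≠ j := fun hq => hpj (h1.mpr hq)
        have hrj : r = j := by
          by_contra hrj
          have hsj : s ≠ j := fun hs => hrj (h2.mpr hs)
          exact hpr (pend_del_reach hn j p r hpj hrj)
        have hsj : s = j := h2.mp hrj
        exact Or.inr ⟨hrj.trans hsj.symm, fun hp => hpj (hp.trans hrj),
          fun hq => hqj (hq.trans hrj)⟩
    · -- pendant edge of j', reversed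
      have hiv : (i : ℕ) = posn n j' := he
      have hp' : posn n j' < n - 2 := by have := posn_le n j'; omega
      have hi : i = ⟨posn n j', hp'⟩ := Fin.ext hiv
      subst hi
      have hePend : s((Sum.inr ⟨posn n j', hp'⟩ : Vt n), Sum.inl j') = pendE hn j' :=
        Sym2.eq_swap
      rw [hePend] at hpq hrs hpr
      left
      have h1 := pend_del_invar hn j' hpq
      have h2 := pend_del_invar hn j' hrs
      simp only [Sum.inl.injEq] at h1 h2
      by_cases hpj : p = j'
      · have hqj : q = j' := h1.mp hpj
        have hrj : r ≠ j' := by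
          rintro rfl
          exact hpr (by rw [hpj])
        have hsj : s ≠ j' := fun hs => hrj (h2.mpr hs)
        exact Or.inl ⟨hpj.trans hqj.symm, fun hr => hrj (hr.trans hpj),
          fun hs => hsj (hs.trans hpj)⟩
      · have hqj : q ≠ j' := fun hq => hpj (h1.mpr hq)
        have hrj : r = j' := by
          by_contra hrj
          have hsj : s ≠ j' := fun hs => hrj (h2.mpr hs)
          exact hpr (pend_del_reach hn j' p r hpj hrj)
        have hsj : s = j' := h2.mp hrj
        exact Or.inr ⟨hrj.trans hsj.symm, fun hp => hpj (hp.trans hrj),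
          fun hq => hqj (hq.trans hrj)⟩
    · -- spine edge
      right
      have hstep : ∀ (k : ℕ) (h2 : k + 1 < n - 2),
          s((Sum.inr ⟨k, by omega⟩ : Vt n), Sum.inr ⟨k + 1, h2⟩) = spineE (n := n) k h2 :=
        fun k h2 => rfl
      rcases he with h | h
      · have h2 : (i : ℕ) + 1 < n - 2 := by rw [h]; exact i'.isLt
        have hi' : i' = ⟨(i : ℕ) + 1, h2⟩ := Fin.ext h.symm
        have hi : (Sum.inr i : Vt n) = Sum.inr ⟨(i : ℕ), by omega⟩ := by simp
        rw [hi', hi, hstep _ h2] at hpq hrs hpr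
        refine ⟨(i : ℕ), h2, ?_⟩
        have h1 := reach_invar (sideS n (i : ℕ)) (sideS_invar (i : ℕ) h2) hpq
        have h3 := reach_invar (sideS n (i : ℕ)) (sideS_invar (i : ℕ) h2) hrs
        simp only [sideS] at h1 h3
        by_cases hps : posn n p ≤ (i : ℕ)
        · left
          refine ⟨hps, h1.mp hps, ?_, ?_⟩
          · by_contra hrr
            exact hpr (side_reach hn _ h2 p r (Or.inl ⟨hps, by omega⟩))
          · by_contra hss
            have : posn n r ≤ (i : ℕ) := h3.mpr (by omega)
            exact hpr (side_reach hn _ h2 p r (Or.inl ⟨hps, this⟩))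
        · right
          have hqs : ¬ posn n q ≤ (i : ℕ) := fun hq => hps (h1.mpr hq)
          have hrr : posn n r ≤ (i : ℕ) := by
            by_contra hrr
            exact hpr (side_reach hn _ h2 p r (Or.inr ⟨by omega, by omega⟩))
          exact ⟨hrr, h3.mp hrr, by omega, by omega⟩
      · -- reversed spine edge
        have h2 : (i' : ℕ) + 1 < n - 2 := by rw [h]; exact i.isLt
        have hi : i = ⟨(i' : ℕ) + 1, h2⟩ := Fin.ext h.symm
        have hi' : (Sum.inr i' : Vt n) = Sum.inr ⟨(i' : ℕ), by omega⟩ := by simp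
        have hswap : s((Sum.inr ⟨(i' : ℕ) + 1, h2⟩ : Vt n), Sum.inr ⟨(i' : ℕ), by omega⟩) =
            spineE (n := n) (i' : ℕ) h2 := Sym2.eq_swap
        rw [hi, hi', hswap] at hpq hrs hpr
        refine ⟨(i' : ℕ), h2, ?_⟩
        have h1 := reach_invar (sideS n (i' : ℕ)) (sideS_invar (i' : ℕ) h2) hpq
        have h3 := reach_invar (sideS n (i' : ℕ)) (sideS_invar (i' : ℕ) h2) hrs
        simp only [sideS] at h1 h3
        by_cases hps : posn n p ≤ (i' : ℕ)
        · left
          refine ⟨hps, h1.mp hps, ?_, ?_⟩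
          · by_contra hrr
            exact hpr (side_reach hn _ h2 p r (Or.inl ⟨hps, by omega⟩))
          · by_contra hss
            have : posn n r ≤ (i' : ℕ) := h3.mpr (by omega)
            exact hpr (side_reach hn _ h2 p r (Or.inl ⟨hps, this⟩))
        · right
          have hqs : ¬ posn n q ≤ (i' : ℕ) := fun hq => hps (h1.mpr hq)
          have hrr : posn n r ≤ (i' : ℕ) := by
            by_contra hrr
            exact hpr (side_reach hn _ h2 p r (Or.inr ⟨by omega, by omega⟩))
          exact ⟨hrr, h3.mp hrr, by omega, by omega⟩
  · rintro ((⟨hpq, hr, hs⟩ | ⟨hrs, hp, hq⟩) | ⟨k, hk, hor⟩)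
    · refine ⟨pendE hn p, pendE_mem hn p, ?_, ?_, ?_⟩
      · rw [hpq]
      · exact pend_del_reach hn p r s hr hs
      · intro hreach
        exact hr (Sum.inl.inj ((pend_del_invar hn p hreach).mp rfl))
    · refine ⟨pendE hn r, pendE_mem hn r, ?_, ?_, ?_⟩
      · exact pend_del_reach hn r p q hp hq
      · rw [hrs]
      · intro hreach
        exact hp (Sum.inl.inj ((pend_del_invar hn r hreach).mpr rfl))
    · rcases hor with ⟨h1, h2, h3, h4⟩ | ⟨h1, h2, h3, h4⟩
      · refine ⟨spineE k hk, spineE_mem k hk, ?_, ?_, ?_⟩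
        · exact side_reach hn k hk p q (Or.inl ⟨h1, h2⟩)
        · exact side_reach hn k hk r s (Or.inr ⟨h3, h4⟩)
        · exact side_unreach k hk p r h1 h3
      · refine ⟨spineE k hk, spineE_mem k hk, ?_, ?_, ?_⟩
        · exact side_reach hn k hk p q (Or.inr ⟨h3, h4⟩)
        · exact side_reach hn k hk r s (Or.inl ⟨h1, h2⟩)
        · intro hreach
          exact side_unreach k hk r p h1 h3 hreach.symm

/-! ### special taxa and the swap -/

def fin0 (hn : 5 ≤ n) : Fin n := ⟨0, by omega⟩
def fin1 (hn : 5 ≤ n) : Fin n := ⟨1, by omega⟩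
def fin2 (hn : 5 ≤ n) : Fin n := ⟨2, by omega⟩

def sw (hn : 5 ≤ n) : Equiv.Perm (Fin n) := Equiv.swap (fin1 hn) (fin2 hn)

lemma posn_f0 (hn : 5 ≤ n) : posn n (fin0 hn) = 0 := by simp [posn, fin0]
lemma posn_f1 (hn : 5 ≤ n) : posn n (fin1 hn) = 0 := by simp [posn, fin1]
lemma posn_f2 (hn : 5 ≤ n) : posn n (fin2 hn) = 1 := by simp [posn, fin2]; omega

lemma posn_zero_cases (hn : 5 ≤ n) (p : Fin n) (h : posn n p = 0) :
    p = fin0 hn ∨ p = fin1 hn := by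
  simp only [posn] at h
  simp only [fin0, fin1, Fin.ext_iff, Fin.val_mk]
  omega

lemma posn_ge2 (hn : 5 ≤ n) (p : Fin n) (h0 : p ≠ fin0 hn) (h1 : p ≠ fin1 hn)
    (h2 : p ≠ fin2 hn) : 2 ≤ posn n p := by
  simp only [fin0, fin1, fin2, ne_eq, Fin.ext_iff, Fin.val_mk] at h0 h1 h2
  simp only [posn]
  omega

lemma sw_f1 (hn : 5 ≤ n) : sw hn (fin1 hn) = fin2 hn := Equiv.swap_apply_left _ _
lemma sw_f2 (hn : 5 ≤ n) : sw hn (fin2 hn) = fin1 hn := Equiv.swap_apply_right _ _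
lemma sw_other (hn : 5 ≤ n) (p : Fin n) (h1 : p ≠ fin1 hn) (h2 : p ≠ fin2 hn) :
    sw hn p = p := Equiv.swap_apply_of_ne_of_ne h1 h2
lemma sw_f0 (hn : 5 ≤ n) : sw hn (fin0 hn) = fin0 hn := by
  apply sw_other <;> simp [fin0, fin1, fin2, Fin.ext_iff]

lemma posn_sw_le (hn : 5 ≤ n) (p : Fin n) (k : ℕ) (hk : 1 ≤ k) (hp : posn n p ≤ k) :
    posn n (sw hn p) ≤ k := by
  by_cases h1 : p = fin1 hn
  · rw [h1, sw_f1, posn_f2 hn]; omega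
  by_cases h2 : p = fin2 hn
  · rw [h2, sw_f2, posn_f1 hn]; omega
  · rw [sw_other hn p h1 h2]; exact hp

lemma dispChar_comm {p q r s : Fin n} (h : DispChar n p q r s) : DispChar n r s p q := by
  rcases h with (⟨h1, h2, h3⟩ | ⟨h1, h2, h3⟩) | ⟨k, hk, hor⟩
  · exact Or.inl (Or.inr ⟨h1, h2, h3⟩)
  · exact Or.inl (Or.inl ⟨h1, h2, h3⟩)
  · exact Or.inr ⟨k, hk, hor.symm⟩

/-- the key one-orientation step -/
lemma spine_swap (hn : 5 ≤ n) (p q r s : Fin n)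
    (h : (p ≠ fin0 hn ∧ q ≠ fin0 hn ∧ r ≠ fin0 hn ∧ s ≠ fin0 hn) ∨
         (p ≠ fin1 hn ∧ q ≠ fin1 hn ∧ r ≠ fin1 hn ∧ s ≠ fin1 hn) ∨
         (p ≠ fin2 hn ∧ q ≠ fin2 hn ∧ r ≠ fin2 hn ∧ s ≠ fin2 hn))
    (k : ℕ) (hk : k + 1 < n - 2)
    (h1 : posn n p ≤ k) (h2 : posn n q ≤ k) (h3 : k < posn n r) (h4 : k < posn n s) :
    DispChar n (sw hn p) (sw hn q) (sw hn r) (sw hn s) := by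
  have hrne1 : r ≠ fin1 hn := by rintro rfl; rw [posn_f1 hn] at h3; omega
  have hsne1 : s ≠ fin1 hn := by rintro rfl; rw [posn_f1 hn] at h4; omega
  by_cases hpq : p = q
  · left; left
    refine ⟨by rw [hpq], ?_, ?_⟩
    · intro hc
      rw [((sw hn).injective hc : r = p)] at h3
      omega
    · intro hc
      rw [((sw hn).injective hc : s = p)] at h4
      omega
  · rcases Nat.lt_or_ge 0 k with hk1 | hk1
    · -- k ≥ 1 : same k works
      have hrne2 : r ≠ fin2 hn := by rintro rfl; rw [posn_f2 hn] at h3; omega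
      have hsne2 : s ≠ fin2 hn := by rintro rfl; rw [posn_f2 hn] at h4; omega
      right
      refine ⟨k, hk, Or.inl ⟨posn_sw_le hn p k hk1 h1, posn_sw_le hn q k hk1 h2, ?_, ?_⟩⟩
      · rw [sw_other hn r hrne1 hrne2]; exact h3
      · rw [sw_other hn s hsne1 hsne2]; exact h4
    · -- k = 0 : {p, q} = {fin0, fin1}
      have hk0 : k = 0 := by omega
      subst hk0
      have hp01 := posn_zero_cases hn p (by omega)
      have hq01 := posn_zero_cases hn q (by omega)
      -- one of p,q is fin0, the other fin1
      have hmem : (p = fin1 hn ∨ q = fin1 hn) ∧ (p = fin0 hn ∨ q = fin0 hn) := by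
        rcases hp01 with hp | hp <;> rcases hq01 with hq | hq <;>
          first
          | (exfalso; exact hpq (hp.trans hq.symm))
          | exact ⟨by tauto, by tauto⟩
      -- hence the "avoid fin2" branch must hold
      have hne2 : r ≠ fin2 hn ∧ s ≠ fin2 hn := by
        rcases h with ⟨ha, hb, hc, hd⟩ | ⟨ha, hb, hc, hd⟩ | ⟨ha, hb, hc, hd⟩
        · rcases hmem.2 with he | he
          · exact absurd he ha
          · exact absurd he hb
        · rcases hmem.1 with he | he
          · exact absurd he ha
          · exact absurd he hb
        · exact ⟨hc, hd⟩
      have hrge : 2 ≤ posn n r := by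
        refine posn_ge2 hn r ?_ hrne1 hne2.1
        rintro rfl; rw [posn_f0 hn] at h3; omega
      have hsge : 2 ≤ posn n s := by
        refine posn_ge2 hn s ?_ hsne1 hne2.2
        rintro rfl; rw [posn_f0 hn] at h4; omega
      right
      refine ⟨1, by omega, Or.inl ⟨?_, ?_, ?_, ?_⟩⟩
      · rcases hp01 with hp | hp <;> subst hp
        · rw [sw_f0 hn, posn_f0 hn]; omega
        · rw [sw_f1 hn, posn_f2 hn]
      · rcases hq01 with hq | hq <;> subst hq
        · rw [sw_f0 hn, posn_f0 hn]; omega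
        · rw [sw_f1 hn, posn_f2 hn]
      · rw [sw_other hn r hrne1 hne2.1]; omega
      · rw [sw_other hn s hsne1 hne2.2]; omega

lemma dispChar_swap (hn : 5 ≤ n) (p q r s : Fin n)
    (h : (p ≠ fin0 hn ∧ q ≠ fin0 hn ∧ r ≠ fin0 hn ∧ s ≠ fin0 hn) ∨
         (p ≠ fin1 hn ∧ q ≠ fin1 hn ∧ r ≠ fin1 hn ∧ s ≠ fin1 hn) ∨
         (p ≠ fin2 hn ∧ q ≠ fin2 hn ∧ r ≠ fin2 hn ∧ s ≠ fin2 hn))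
    (hd : DispChar n p q r s) :
    DispChar n (sw hn p) (sw hn q) (sw hn r) (sw hn s) := by
  rcases hd with (⟨hpq, hr, hs⟩ | ⟨hrs, hp, hq⟩) | ⟨k, hk, hor⟩
  · exact Or.inl (Or.inl ⟨by rw [hpq], fun hc => hr ((sw hn).injective hc),
      fun hc => hs ((sw hn).injective hc)⟩)
  · exact Or.inl (Or.inr ⟨by rw [hrs], fun hc => hp ((sw hn).injective hc),
      fun hc => hq ((sw hn).injective hc)⟩)
  · rcases hor with ⟨h1, h2, h3, h4⟩ | ⟨h1, h2, h3, h4⟩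
    · exact spine_swap hn p q r s h k hk h1 h2 h3 h4
    · refine dispChar_comm (spine_swap hn r s p q ?_ k hk h1 h2 h3 h4)
      rcases h with ⟨a, b, c, d⟩ | ⟨a, b, c, d⟩ | ⟨a, b, c, d⟩
      exacts [Or.inl ⟨c, d, a, b⟩, Or.inr (Or.inl ⟨c, d, a, b⟩), Or.inr (Or.inr ⟨c, d, a, b⟩)]

lemma dispChar_swap_iff (hn : 5 ≤ n) (p q r s : Fin n)
    (h : (p ≠ fin0 hn ∧ q ≠ fin0 hn ∧ r ≠ fin0 hn ∧ s ≠ fin0 hn) ∨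
         (p ≠ fin1 hn ∧ q ≠ fin1 hn ∧ r ≠ fin1 hn ∧ s ≠ fin1 hn) ∨
         (p ≠ fin2 hn ∧ q ≠ fin2 hn ∧ r ≠ fin2 hn ∧ s ≠ fin2 hn)) :
    DispChar n p q r s ↔ DispChar n (sw hn p) (sw hn q) (sw hn r) (sw hn s) := by
  constructor
  · exact dispChar_swap hn p q r s h
  · intro hd
    have h' : (sw hn p ≠ fin0 hn ∧ sw hn q ≠ fin0 hn ∧ sw hn r ≠ fin0 hn ∧ sw hn s ≠ fin0 hn) ∨
        (sw hn p ≠ fin1 hn ∧ sw hn q ≠ fin1 hn ∧ sw hn r ≠ fin1 hn ∧ sw hn s ≠ fin1 hn) ∨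
        (sw hn p ≠ fin2 hn ∧ sw hn q ≠ fin2 hn ∧ sw hn r ≠ fin2 hn ∧ sw hn s ≠ fin2 hn) := by
      have key0 : ∀ x : Fin n, x ≠ fin0 hn → sw hn x ≠ fin0 hn := by
        intro x hx hc
        rw [← sw_f0 hn] at hc
        exact hx ((sw hn).injective hc)
      have key1 : ∀ x : Fin n, x ≠ fin1 hn → sw hn x ≠ fin2 hn := by
        intro x hx hc
        rw [← sw_f1 hn] at hc
        exact hx ((sw hn).injective hc)
      have key2 : ∀ x : Fin n, x ≠ fin2 hn → sw hn x ≠ fin1 hn := by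
        intro x hx hc
        rw [← sw_f2 hn] at hc
        exact hx ((sw hn).injective hc)
      rcases h with ⟨a, b, c, d⟩ | ⟨a, b, c, d⟩ | ⟨a, b, c, d⟩
      exacts [Or.inl ⟨key0 _ a, key0 _ b, key0 _ c, key0 _ d⟩,
        Or.inr (Or.inr ⟨key1 _ a, key1 _ b, key1 _ c, key1 _ d⟩),
        Or.inr (Or.inl ⟨key2 _ a, key2 _ b, key2 _ c, key2 _ d⟩)]
    have h2 := dispChar_swap hn _ _ _ _ h' hd
    have hswsw : ∀ x : Fin n, sw hn (sw hn x) = x := fun x => Equiv.swap_apply_self _ _ x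
    rw [hswsw, hswsw, hswsw, hswsw] at h2
    exact h2

/-! ### the two phylogenetic trees -/

def catT (hn : 5 ≤ n) : PhyloTree (Fin n) where
  V := Vt n
  finV := inferInstance
  g := catG n
  tree := cat_isTree hn
  deg := by
    rintro (j | i)
    · exact Or.inl (deg_leaf hn j)
    · exact Or.inr (deg_internal hn i)
  lab := Sum.inl
  inj := Sum.inl_injective
  leaf_iff := by
    rintro (j | i)
    · simp only [deg_leaf hn j, true_iff]
      exact ⟨j, rfl⟩
    · simp only [deg_internal hn i]
      constructor
      · intro h; omega
      · rintro ⟨x, hx⟩; exact absurd hx (by simp)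

def catT' (hn : 5 ≤ n) : PhyloTree (Fin n) where
  V := Vt n
  finV := inferInstance
  g := catG n
  tree := cat_isTree hn
  deg := by
    rintro (j | i)
    · exact Or.inl (deg_leaf hn j)
    · exact Or.inr (deg_internal hn i)
  lab := fun x => Sum.inl (sw hn x)
  inj := fun x y h => (sw hn).injective (Sum.inl_injective h)
  leaf_iff := by
    rintro (j | i)
    · simp only [deg_leaf hn j, true_iff]
      exact ⟨(sw hn).symm j, by simp⟩
    · simp only [deg_internal hn i]
      constructor
      · intro h; omega
      · rintro ⟨x, hx⟩; exact absurd hx (by simp)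

lemma catT_disp (hn : 5 ≤ n) (p q r s : Fin n) :
    (catT hn).Displays p q r s ↔ DispChar n p q r s :=
  disp_iff hn p q r s

lemma catT'_disp (hn : 5 ≤ n) (p q r s : Fin n) :
    (catT' hn).Displays p q r s ↔ DispChar n (sw hn p) (sw hn q) (sw hn r) (sw hn s) :=
  disp_iff hn (sw hn p) (sw hn q) (sw hn r) (sw hn s)

lemma not_iso (hn : 5 ≤ n) : ¬ (catT hn).Iso (catT' hn) := by
  rintro ⟨f, hadj, hlab⟩
  have hlab' : ∀ x : Fin n, f (Sum.inl x) = Sum.inl (sw hn x) := hlab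
  have h0 : (0 : ℕ) < n - 2 := by omega
  -- f (inr 0) is adjacent to inl (fin0)
  have a0 : (catG n).Adj (.inl (fin0 hn)) (.inr ⟨0, h0⟩) := by
    simp [posn_f0 hn]
  have a0' : (catG n).Adj (Sum.inl (sw hn (fin0 hn))) (f (Sum.inr ⟨0, h0⟩)) := by
    have := (hadj (Sum.inl (fin0 hn)) (Sum.inr ⟨0, h0⟩)).mp a0
    rwa [hlab' (fin0 hn)] at this
  rw [sw_f0 hn] at a0'
  obtain ⟨w, hw, hwv⟩ : ∃ w : Fin (n - 2), f (Sum.inr ⟨0, h0⟩) = Sum.inr w ∧ (w : ℕ) = 0 := by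
    rcases hfw : f (Sum.inr ⟨0, h0⟩) with j | w
    · rw [hfw] at a0'; exact absurd a0' (by simp)
    · rw [hfw] at a0'
      refine ⟨w, rfl, ?_⟩
      have : (w : ℕ) = posn n (fin0 hn) := a0'
      rwa [posn_f0 hn] at this
  have a1 : (catG n).Adj (.inl (fin1 hn)) (.inr ⟨0, h0⟩) := by
    simp [posn_f1 hn]
  have a1' := (hadj (Sum.inl (fin1 hn)) (Sum.inr ⟨0, h0⟩)).mp a1
  rw [hlab' (fin1 hn), sw_f1 hn, hw] at a1'
  have : (w : ℕ) = posn n (fin2 hn) := a1'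
  rw [posn_f2 hn] at this
  omega

lemma agree (hn : 5 ≤ n) (Y : Finset (Fin n))
    (hY : ¬ ({fin0 hn, fin1 hn, fin2 hn} : Finset (Fin n)) ⊆ Y) :
    AgreeOn (catT hn) (catT' hn) Y := by
  intro a b c d ha hb hc hd
  rw [catT_disp, catT'_disp]
  apply dispChar_swap_iff
  rw [Finset.insert_subset_iff, Finset.insert_subset_iff, Finset.singleton_subset_iff] at hY
  push_neg at hY
  by_cases h0 : fin0 hn ∈ Y
  · by_cases h1 : fin1 hn ∈ Y
    · have h2 : fin2 hn ∉ Y := fun h => hY h0 h1 h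
      exact Or.inr (Or.inr ⟨fun h => h2 (h ▸ ha), fun h => h2 (h ▸ hb),
        fun h => h2 (h ▸ hc), fun h => h2 (h ▸ hd)⟩)
    · exact Or.inr (Or.inl ⟨fun h => h1 (h ▸ ha), fun h => h1 (h ▸ hb),
        fun h => h1 (h ▸ hc), fun h => h1 (h ▸ hd)⟩)
  · exact Or.inl ⟨fun h => h0 (h ▸ ha), fun h => h0 (h ▸ hb),
      fun h => h0 (h ▸ hc), fun h => h0 (h ▸ hd)⟩

end Part2


open Cat15 Part2

/-- The minimal number `k(n)` such that every collection of at least `k` quartets is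
phylogenetically decisive is greater than `C(n,4) − (n − 3)`: there is a collection of
quartets of size `C(n,4) − (n − 3)` that is not decisive. -/
theorem stmt_15 (n : ℕ) (hn : 5 ≤ n) :
    ∃ S' : Finset (Finset (Fin n)), (∀ Y ∈ S', Y.card = 4) ∧
      S'.card = n.choose 4 - (n - 3) ∧ ¬ Decisive S' := by
  classical
  set sub : Finset (Fin n) := {fin0 hn, fin1 hn, fin2 hn} with hsub_def
  refine ⟨(Finset.univ.powersetCard 4).filter (fun Y => ¬ sub ⊆ Y), ?_, ?_, ?_⟩
  · intro Y hY
    rw [Finset.mem_filter, Finset.mem_powersetCard] at hY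
    exact hY.1.2
  · have hsub_card : sub.card = 3 := by
      rw [hsub_def, Finset.card_insert_of_notMem (by simp [fin0, fin1, fin2, Fin.ext_iff]),
        Finset.card_insert_of_notMem (by simp [fin1, fin2, Fin.ext_iff]),
        Finset.card_singleton]
    have htot : ((Finset.univ : Finset (Fin n)).powersetCard 4).card = n.choose 4 := by
      rw [Finset.card_powersetCard, Finset.card_univ, Fintype.card_fin]
    have hpart := Finset.card_filter_add_card_filter_not
      (s := (Finset.univ : Finset (Fin n)).powersetCard 4) (p := fun Y => sub ⊆ Y)
    have hB : (((Finset.univ : Finset (Fin n)).powersetCard 4).filter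
        (fun Y => sub ⊆ Y)).card = n - 3 := by
      have hbij := Finset.card_bij
        (t := ((Finset.univ : Finset (Fin n)).powersetCard 4).filter (fun Y => sub ⊆ Y))
        (i := fun (a : Fin n) (_ : a ∈ Finset.univ \ sub) => insert a sub)
        (hi := ?_) (i_inj := ?_) (i_surj := ?_)
      · rw [← hbij, Finset.card_sdiff_of_subset (Finset.subset_univ _), Finset.card_univ,
          Fintype.card_fin, hsub_card]
      · intro a ha
        rw [Finset.mem_sdiff] at ha
        rw [Finset.mem_filter, Finset.mem_powersetCard]
        exact ⟨⟨Finset.subset_univ _, by rw [Finset.card_insert_of_notMem ha.2, hsub_card]⟩,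
          Finset.subset_insert _ _⟩
      · intro a1 h1 a2 h2 heq
        rw [Finset.mem_sdiff] at h1 h2
        have heq' : insert a1 sub = insert a2 sub := heq
        have : a1 ∈ insert a2 sub := heq' ▸ Finset.mem_insert_self a1 sub
        rcases Finset.mem_insert.mp this with h | h
        · exact h
        · exact absurd h h1.2
      · intro Y hY
        rw [Finset.mem_filter, Finset.mem_powersetCard] at hY
        obtain ⟨⟨-, hc⟩, hs⟩ := hY
        have hd : (Y \ sub).card = 1 := by
          rw [Finset.card_sdiff_of_subset hs, hc, hsub_card]
        obtain ⟨a, hA⟩ := Finset.card_eq_one.mp hd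
        have haY : a ∈ Y \ sub := hA ▸ Finset.mem_singleton_self a
        rw [Finset.mem_sdiff] at haY
        refine ⟨a, Finset.mem_sdiff.mpr ⟨Finset.mem_univ _, haY.2⟩, ?_⟩
        have hu := Finset.sdiff_union_of_subset hs
        rw [hA] at hu
        show insert a sub = Y
        rw [Finset.insert_eq]
        exact hu
    omega
  · intro hdec
    refine not_iso hn (hdec (catT hn) (catT' hn) ?_)
    intro Y hY
    rw [Finset.mem_filter] at hY
    exact agree hn Y hY.2
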